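/- Every 2 × 2 complex unitary matrix U can be decomposed as U = D₁ · B(θ) · D₂, where θ, α, β, γ, δ are real numbers, D₁ = diag(e^{iα}, e^{iβ}) and D₂ = diag(e^{iγ}, e^{iδ}) are diagonal matrices of unit-modulus phases, and B(θ) = [[cos θ, i·sin θ], [i·sin θ, cos θ]] is the beam splitter matrix. -/

import Mathlib

open Matrix

/-- The beam splitter matrix `B(θ) = [[cos θ, i sin θ], [i sin θ, cos θ]]`. -/
noncomputable def beamSplitter (θ : ℝ) : Matrix (Fin 2) (Fin 2) ℂ :=
  !![(Real.cos θ : ℂ), Complex.I * Real.sin θ;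
     Complex.I * Real.sin θ, (Real.cos θ : ℂ)]

/-- every `2 × 2` complex unitary `U` decomposes as
`U = diag(e^{iα}, e^{iβ}) · B(θ) · diag(e^{iγ}, e^{iδ})` for real `θ, α, β, γ, δ`. -/
theorem unitary2_decomposition (U : Matrix (Fin 2) (Fin 2) ℂ)
    (hU : U ∈ Matrix.unitaryGroup (Fin 2) ℂ) :
    ∃ θ α β γ δ : ℝ,
      U = Matrix.diagonal ![Complex.exp (Complex.I * α), Complex.exp (Complex.I * β)]
            * beamSplitter θ
            * Matrix.diagonal ![Complex.exp (Complex.I * γ), Complex.exp (Complex.I * δ)] := by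
  have h := Matrix.mem_unitaryGroup_iff.mp hU
  have h' := Matrix.mem_unitaryGroup_iff'.mp hU
  have h1 := congrFun (congrFun h 0) 0
  have h2 := congrFun (congrFun h 0) 1
  have g1 := congrFun (congrFun h' 0) 0
  have g3 := congrFun (congrFun h' 1) 1
  simp [Matrix.mul_apply, Fin.sum_univ_two, Matrix.one_apply] at h1 h2 g1 g3
  -- real modulus relations
  have hab : norm (U 0 0) ^ 2 + norm (U 0 1) ^ 2 = 1 := by
    have := h1
    rw [Complex.mul_conj, Complex.mul_conj, ← Complex.ofReal_add] at this
    rw [Complex.normSq_eq_norm_sq, Complex.normSq_eq_norm_sq] at this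
    exact_mod_cast this
  have hac : norm (U 0 0) ^ 2 + norm (U 1 0) ^ 2 = 1 := by
    have hg : U 0 0 * (starRingEnd ℂ) (U 0 0) + U 1 0 * (starRingEnd ℂ) (U 1 0) = 1 := by
      linear_combination g1
    rw [Complex.mul_conj, Complex.mul_conj, ← Complex.ofReal_add] at hg
    rw [Complex.normSq_eq_norm_sq, Complex.normSq_eq_norm_sq] at hg
    exact_mod_cast hg
  have hbd : norm (U 0 1) ^ 2 + norm (U 1 1) ^ 2 = 1 := by
    have hg : U 0 1 * (starRingEnd ℂ) (U 0 1) + U 1 1 * (starRingEnd ℂ) (U 1 1) = 1 := by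
      linear_combination g3
    rw [Complex.mul_conj, Complex.mul_conj, ← Complex.ofReal_add] at hg
    rw [Complex.normSq_eq_norm_sq, Complex.normSq_eq_norm_sq] at hg
    exact_mod_cast hg
  have hcb : norm (U 1 0) = norm (U 0 1) := by
    nlinarith [norm_nonneg (U 0 1), norm_nonneg (U 1 0)]
  have hda : norm (U 1 1) = norm (U 0 0) := by
    nlinarith [norm_nonneg (U 0 0), norm_nonneg (U 1 1)]
  have E : ∀ z : ℂ, Complex.exp (Complex.I * z.arg) * (norm z : ℂ) = z := by
    intro z
    rw [mul_comm Complex.I, mul_comm]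
    exact Complex.norm_mul_exp_arg_mul_I z
  by_cases hb : U 0 1 = 0
  · -- U is diagonal
    have hc : U 1 0 = 0 := by
      have : norm (U 1 0) = 0 := by rw [hcb, hb]; simp
      exact norm_eq_zero.mp this
    have haa : norm (U 0 0) = 1 := by
      have : norm (U 0 0) ^ 2 = 1 := by rw [hb] at hab; simpa using hab
      nlinarith [norm_nonneg (U 0 0)]
    have hdd : norm (U 1 1) = 1 := by rw [hda, haa]
    refine ⟨0, Complex.arg (U 0 0), Complex.arg (U 1 1), 0, 0, ?_⟩
    ext i j
    fin_cases i <;> fin_cases j <;>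
      simp [beamSplitter, Matrix.mul_apply, Matrix.diagonal_apply, Fin.sum_univ_two, hb, hc]
    · have := E (U 0 0); rw [haa] at this; simpa using this.symm
    · have := E (U 1 1); rw [hdd] at this; simpa using this.symm
  · -- main case : U 0 1 ≠ 0
    have hbne : (norm (U 0 1) : ℂ) ≠ 0 := by simpa using hb
    have hcne0 : U 1 0 ≠ 0 := by
      intro hc
      rw [hc] at hcb; simp at hcb; exact hb (norm_eq_zero.mp hcb.symm)
    have hcne : (norm (U 1 0) : ℂ) ≠ 0 := by simpa using hcne0
    have habs1 : norm (U 0 0) ≤ 1 := by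
      nlinarith [norm_nonneg (U 0 0), sq_nonneg (norm (U 0 1))]
    have hcos : Real.cos (Real.arccos (norm (U 0 0))) = norm (U 0 0) :=
      Real.cos_arccos (by linarith [norm_nonneg (U 0 0)]) habs1
    have hsin : Real.sin (Real.arccos (norm (U 0 0))) = norm (U 0 1) := by
      rw [Real.sin_arccos,
        show 1 - norm (U 0 0) ^ 2 = norm (U 0 1) ^ 2 by linarith]
      exact Real.sqrt_sq (norm_nonneg (U 0 1))
    have hcosC : Complex.cos ((Real.arccos (norm (U 0 0)) : ℝ) : ℂ)
        = (norm (U 0 0) : ℂ) := by rw [← Complex.ofReal_cos, hcos]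
    have hsinC : Complex.sin ((Real.arccos (norm (U 0 0)) : ℝ) : ℂ)
        = (norm (U 0 1) : ℂ) := by rw [← Complex.ofReal_sin, hsin]
    have hA := E (U 0 0)
    have hBb : Complex.exp (Complex.I * (Complex.arg (-(Complex.I * U 0 1)) : ℂ))
        * (norm (U 0 1) : ℂ) = -(Complex.I * U 0 1) := by
      have := E (-(Complex.I * U 0 1))
      rwa [show norm (-(Complex.I * U 0 1)) = norm (U 0 1) by simp] at this
    have hCc : Complex.exp (Complex.I * (Complex.arg (-(Complex.I * U 1 0)) : ℂ))
        * (norm (U 1 0) : ℂ) = -(Complex.I * U 1 0) := by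
      have := E (-(Complex.I * U 1 0))
      rwa [show norm (-(Complex.I * U 1 0)) = norm (U 1 0) by simp] at this
    have hAne : Complex.exp (Complex.I * (Complex.arg (U 0 0) : ℂ)) ≠ 0 :=
      Complex.exp_ne_zero _
    have key : (starRingEnd ℂ) (U 0 0) * U 1 0 * U 0 1
        + ((starRingEnd ℂ) (U 0 1) * U 0 1) * U 1 1 = 0 := by
      have hc2 := congrArg (starRingEnd ℂ) h2
      simp only [_root_.map_add, _root_.map_mul, _root_.map_zero, Complex.conj_conj] at hc2
      linear_combination U 0 1 * hc2
    have hk3 : U 0 0 * (starRingEnd ℂ) (U 0 0) = (norm (U 0 0) : ℂ) ^ 2 := by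
      rw [Complex.mul_conj, Complex.normSq_eq_norm_sq]; push_cast; ring
    have hk4 : U 0 1 * (starRingEnd ℂ) (U 0 1) = (norm (U 0 1) : ℂ) ^ 2 := by
      rw [Complex.mul_conj, Complex.normSq_eq_norm_sq]; push_cast; ring
    have hcbC : (norm (U 0 1) : ℂ) = (norm (U 1 0) : ℂ) := by
      exact_mod_cast hcb.symm
    refine ⟨Real.arccos (norm (U 0 0)), Complex.arg (U 0 0),
      Complex.arg (-(Complex.I * U 1 0)), 0,
      Complex.arg (-(Complex.I * U 0 1)) - Complex.arg (U 0 0), ?_⟩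
    ext i j
    fin_cases i <;> fin_cases j <;>
      simp only [Matrix.mul_apply, Matrix.diagonal_apply, Fin.sum_univ_two, beamSplitter,
        Fin.isValue, Matrix.cons_val', Matrix.cons_val_zero, Matrix.cons_val_one,
        Matrix.head_cons, Matrix.head_fin_const, Matrix.empty_val', Matrix.cons_val_fin_one,
        Fin.zero_eta, Fin.mk_one, Matrix.of_apply, ne_eq, zero_ne_one, not_false_eq_true,
        one_ne_zero, if_true, if_false, ite_true, ite_false, mul_zero, zero_mul, add_zero,
        zero_add, Complex.ofReal_zero, Complex.ofReal_sub, Complex.exp_zero, mul_one,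
        ← Complex.ofReal_cos, ← Complex.ofReal_sin]
    · -- (0,0)
      rw [show ((Real.cos (Real.arccos (norm (U 0 0))) : ℝ) : ℂ)
          = Complex.cos ((Real.arccos (norm (U 0 0)) : ℝ) : ℂ) from
          (Complex.ofReal_cos _), hcosC]
      exact (E (U 0 0)).symm
    · -- (0,1)
      rw [show ((Real.sin (Real.arccos (norm (U 0 0))) : ℝ) : ℂ)
          = Complex.sin ((Real.arccos (norm (U 0 0)) : ℝ) : ℂ) from
          (Complex.ofReal_sin _), hsinC, mul_sub, Complex.exp_sub]
      rw [eq_comm, ← mul_div_assoc, div_eq_iff hAne]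
      linear_combination (Complex.exp (Complex.I * (Complex.arg (U 0 0) : ℂ)) * Complex.I)
          * hBb
        + (-(Complex.exp (Complex.I * (Complex.arg (U 0 0) : ℂ)) * U 0 1)) * Complex.I_mul_I
    · -- (1,0)
      rw [show ((Real.sin (Real.arccos (norm (U 0 0))) : ℝ) : ℂ)
          = Complex.sin ((Real.arccos (norm (U 0 0)) : ℝ) : ℂ) from
          (Complex.ofReal_sin _), hsinC, hcbC]
      linear_combination (-Complex.I) * hCc + U 1 0 * Complex.I_mul_I
    · -- (1,1)
      rw [show ((Real.cos (Real.arccos (norm (U 0 0))) : ℝ) : ℂ)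
          = Complex.cos ((Real.arccos (norm (U 0 0)) : ℝ) : ℂ) from
          (Complex.ofReal_cos _), hcosC, mul_sub, Complex.exp_sub]
      rcases eq_or_ne (U 0 0) 0 with haz | haz
      · have hdz : U 1 1 = 0 := by
          have : norm (U 1 1) = 0 := by rw [hda, haz]; simp
          exact norm_eq_zero.mp this
        rw [hdz, haz]
        simp
      · rw [eq_comm, ← mul_div_assoc, div_eq_iff hAne]
        refine mul_left_cancel₀ (mul_ne_zero (mul_ne_zero hbne hcne)
          (show (norm (U 0 0) : ℂ) ≠ 0 by simpa using haz)) ?_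
        linear_combination -(
          (U 1 1 * (norm (U 0 1) : ℂ) * (norm (U 1 0) : ℂ)) * hA
          + (-((norm (U 0 0) : ℂ) ^ 2
              * Complex.exp (Complex.I * (Complex.arg (-(Complex.I * U 0 1)) : ℂ))
              * (norm (U 0 1) : ℂ))) * hCc
          + ((norm (U 0 0) : ℂ) ^ 2 * Complex.I * U 1 0) * hBb
          + (-((norm (U 0 0) : ℂ) ^ 2 * U 1 0 * U 0 1)) * Complex.I_mul_I
          + (-(U 1 0 * U 0 1)) * hk3
          + U 0 0 * key
          + (-(U 0 0 * U 1 1)) * hk4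
          + (-(U 0 0 * U 1 1 * (norm (U 0 1) : ℂ))) * hcbC)
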